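/- Let (G,τ) be an ss-characterized precompact Hausdorff abelian group whose underlying topological space is a k-space (a subset is closed if and only if its intersection with every compact subset is closed in that compact subset). Then G is countable and (G,τ) is a sequential space (every sequentially closed subset is closed). -/

import Mathlib

open Filter Topology

noncomputable section

namespace SSChar

/-- The circle group `𝕋 = ℝ/ℤ`. -/
abbrev Torus : Type := AddCircle (1 : ℝ)

variable {G : Type*}

/-- The covering condition defining precompactness (total boundedness) of a group
topology: every neighborhood `U` of `0` admits a finite set `F` with `G = F + U`. -/
def PrecompactCover [AddCommGroup G] (t : TopologicalSpace G) : Prop :=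
  ∀ U ∈ @nhds G t 0, ∃ F : Set G, F.Finite ∧ ∀ x : G, ∃ f ∈ F, x - f ∈ U

/-- `t` is a Hausdorff group topology on `G`. -/
def IsHausdorffGroupTopology [AddCommGroup G] (t : TopologicalSpace G) : Prop :=
  @IsTopologicalAddGroup G t _ ∧ @T2Space G t

/-- `t` is a precompact Hausdorff group topology on `G`. -/
def IsPrecompactGroupTopology [AddCommGroup G] (t : TopologicalSpace G) : Prop :=
  IsHausdorffGroupTopology t ∧ PrecompactCover t

/-- The sequence `u` converges to `0` in the topology `t`. -/
def ConvergesToZero [AddCommGroup G] (t : TopologicalSpace G) (u : ℕ → G) : Prop :=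
  Filter.Tendsto u Filter.atTop (@nhds G t 0)

/-- `u` is a TB-sequence: some precompact Hausdorff group topology makes `u → 0`. -/
def IsTBSequence [AddCommGroup G] (u : ℕ → G) : Prop :=
  ∃ t : TopologicalSpace G, IsPrecompactGroupTopology t ∧ ConvergesToZero t u

/-- `t` is the finest precompact Hausdorff group topology in which `u → 0`,
i.e. `t = τ_u`.  (Recall that in Mathlib's order on topologies, finer means `≤`.) -/
def IsTauU [AddCommGroup G] (u : ℕ → G) (t : TopologicalSpace G) : Prop :=
  IsPrecompactGroupTopology t ∧ ConvergesToZero t u ∧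
    ∀ t' : TopologicalSpace G, IsPrecompactGroupTopology t' → ConvergesToZero t' u → t ≤ t'

/-- `t` is the finest Hausdorff group topology in which `u → 0`, i.e. `t = 𝒯_u`. -/
def IsTTu [AddCommGroup G] (u : ℕ → G) (t : TopologicalSpace G) : Prop :=
  IsHausdorffGroupTopology t ∧ ConvergesToZero t u ∧
    ∀ t' : TopologicalSpace G, IsHausdorffGroupTopology t' → ConvergesToZero t' u → t ≤ t'

/-- `(G, t)` is single-sequence characterized: `t = τ_u` for some (TB-)sequence `u`. -/
def SSCharacterized [AddCommGroup G] (t : TopologicalSpace G) : Prop :=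
  ∃ u : ℕ → G, IsTauU u t

/-- `χ` is a `t`-continuous character of `G`. -/
def IsContChar [AddCommGroup G] (t : TopologicalSpace G) (χ : G →+ Torus) : Prop :=
  @Continuous G Torus t _ χ

/-- The group of `t`-continuous characters of `G`. -/
def charGroup (G : Type*) [AddCommGroup G] (t : TopologicalSpace G) : Type _ :=
  {χ : G →+ Torus // IsContChar t χ}

/-- The compact-open topology on the character group: this makes it the
Pontryagin dual `(G,t)^∧`. -/
def charTopology (G : Type*) [AddCommGroup G] (t : TopologicalSpace G) :
    TopologicalSpace (charGroup G t) :=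
  TopologicalSpace.generateFrom
    { S | ∃ (K : Set G) (U : Set Torus), @IsCompact G t K ∧ IsOpen U ∧
        S = { χ : charGroup G t | ∀ x ∈ K, χ.1 x ∈ U } }

/-- The Bohr modification `t⁺` of `t`: the initial topology induced by all
`t`-continuous characters. -/
def bohrModification [AddCommGroup G] (t : TopologicalSpace G) : TopologicalSpace G :=
  ⨅ χ : charGroup G t, TopologicalSpace.induced (χ.1 : G → Torus) inferInstance

/-- The Bohr topology of the (discrete) abelian group `X`: the initial topology
induced by all homomorphisms `X → 𝕋`. -/
def bohrDiscrete (X : Type*) [AddCommGroup X] : TopologicalSpace X :=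
  ⨅ χ : X →+ Torus, TopologicalSpace.induced (χ : X → Torus) inferInstance

/-- The extension topology `ζ̄` on `G` of a group topology `ζ` on the subgroup `H`:
its neighborhood filter at `x` is generated by the sets `x + V`, `V` a
`ζ`-neighborhood of `0` in `H`. -/
def extTopology [AddCommGroup G] (H : AddSubgroup G) (ζ : TopologicalSpace H) :
    TopologicalSpace G :=
  TopologicalSpace.mkOfNhds fun x => Filter.map (fun h : H => x + (h : G)) (@nhds H ζ 0)

/-- The subspace topology induced on a subgroup `H` by a topology `t` on `G`. -/
def restrictTopology [AddCommGroup G] (H : AddSubgroup G) (t : TopologicalSpace G) :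
    TopologicalSpace H :=
  t.induced (Subtype.val : H → G)

/-- The quotient topology on `G ⧸ H` induced by a topology `t` on `G`. -/
def quotientTopology [AddCommGroup G] (H : AddSubgroup G) (t : TopologicalSpace G) :
    TopologicalSpace (G ⧸ H) :=
  t.coinduced (QuotientAddGroup.mk : G → G ⧸ H)

/-- `H` is B-embedded in `(G, t)`: every (algebraic) character of `G ⧸ H` is
continuous in the quotient topology. -/
def IsBEmbedded [AddCommGroup G] (t : TopologicalSpace G) (H : AddSubgroup G) : Prop :=
  ∀ χ : G ⧸ H →+ Torus, @Continuous (G ⧸ H) Torus (quotientTopology H t) _ χ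

/-- `t` is the finest precompact extension to `G` of the topology `ζ` on the
subgroup `H`: `t` is a precompact Hausdorff group topology restricting to `ζ` on `H`,
and every precompact Hausdorff group topology on `G` restricting to `ζ` on `H`
is coarser than `t`. -/
def IsFinestPrecompactExtension [AddCommGroup G] (H : AddSubgroup G)
    (ζ : TopologicalSpace H) (t : TopologicalSpace G) : Prop :=
  IsPrecompactGroupTopology t ∧ restrictTopology H t = ζ ∧
    ∀ t' : TopologicalSpace G, IsPrecompactGroupTopology t' → restrictTopology H t' = ζ →
      t ≤ t'

/-- `𝕋₊`: the image of `[-1/4, 1/4]` under the quotient map `ℝ → 𝕋`. -/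
def Tplus : Set Torus := (fun x : ℝ => (x : Torus)) '' Set.Icc (-(1/4) : ℝ) (1/4)

/-- `A` is quasi-convex in `(G, t)`. -/
def IsQuasiConvex [AddCommGroup G] (t : TopologicalSpace G) (A : Set G) : Prop :=
  ∀ g ∉ A, ∃ χ : G →+ Torus, IsContChar t χ ∧ (∀ a ∈ A, χ a ∈ Tplus) ∧ χ g ∉ Tplus

/-- `(G, t)` is locally quasi-convex: `0` has a neighborhood base of
quasi-convex sets. -/
def IsLocallyQuasiConvex [AddCommGroup G] (t : TopologicalSpace G) : Prop :=
  ∀ U ∈ @nhds G t 0, ∃ V ∈ @nhds G t 0, V ⊆ U ∧ IsQuasiConvex t V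

/-- The weight of a topology: the minimal cardinality of a base. -/
def tweight {X : Type*} (t : TopologicalSpace X) : Cardinal :=
  sInf { c : Cardinal |
    ∃ B : Set (Set X), @TopologicalSpace.IsTopologicalBasis X t B ∧ c = Cardinal.mk B }

/-- `(G, t)` is maximally almost periodic: the `t`-continuous characters
separate the points of `G`. -/
def IsMAP [AddCommGroup G] (t : TopologicalSpace G) : Prop :=
  ∀ x : G, x ≠ 0 → ∃ χ : G →+ Torus, IsContChar t χ ∧ χ x ≠ 0

/-- Two topologies on `G` are compatible: they have the same continuous characters. -/
def Compatible [AddCommGroup G] (t t' : TopologicalSpace G) : Prop :=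
  ∀ χ : G →+ Torus, IsContChar t χ ↔ IsContChar t' χ

/-- `(G, t)` is a MAP-Mackey group: it is a MAP Hausdorff group topology and every
compatible MAP group topology on `G` is coarser. -/
def IsMAPMackey [AddCommGroup G] (t : TopologicalSpace G) : Prop :=
  IsHausdorffGroupTopology t ∧ IsMAP t ∧
    ∀ t' : TopologicalSpace G, @IsTopologicalAddGroup G t' _ → IsMAP t' → Compatible t t' →
      t ≤ t'

/-- `(X, t)` is a k-space: a subset is closed as soon as its intersection with every
compact subset `K` is closed in `K`. -/
def IsKSpace {X : Type*} (t : TopologicalSpace X) : Prop :=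
  ∀ A : Set X,
    (∀ K : Set X, @IsCompact X t K →
      @IsClosed K (t.induced (Subtype.val : K → X)) {x : K | (x : X) ∈ A}) →
    @IsClosed X t A

/-- `(X, t)` is pseudocompact: every continuous real-valued function is bounded. -/
def IsPseudocompact {X : Type*} (t : TopologicalSpace X) : Prop :=
  ∀ f : X → ℝ, @Continuous X ℝ t _ f → ∃ C : ℝ, ∀ x : X, |f x| ≤ C

/-- `(X, t)` is sequentially complete: every Cauchy sequence (w.r.t. the group
uniformity) converges. -/
def SeqComplete {X : Type*} [AddCommGroup X] (t : TopologicalSpace X) : Prop :=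
  ∀ x : ℕ → X, (∀ U ∈ @nhds X t 0, ∃ N : ℕ, ∀ m ≥ N, ∀ n ≥ N, x m - x n ∈ U) →
    ∃ a : X, Filter.Tendsto x Filter.atTop (@nhds X t a)




section AuxProofs

open MeasureTheory

private lemma exists_sub_nhds [AddCommGroup G] (t : TopologicalSpace G)
    (hg : @IsTopologicalAddGroup G t _) {U : Set G} (hU : U ∈ @nhds G t 0) :
    ∃ V ∈ @nhds G t 0, ∀ a ∈ V, ∀ b ∈ V, a - b ∈ U := by
  letI := t
  haveI := hg
  obtain ⟨V, hV, hVU⟩ := exists_nhds_zero_half hU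
  have hnegV : (fun x : G => -x) ⁻¹' V ∈ 𝓝 (0 : G) := by
    have h := (continuous_neg (G := G)).continuousAt (x := (0 : G))
    have := h.preimage_mem_nhds (by simpa using hV)
    simpa using this
  refine ⟨V ∩ (fun x : G => -x) ⁻¹' V, Filter.inter_mem hV hnegV, ?_⟩
  rintro a ⟨haV, -⟩ b ⟨-, hbV⟩
  have := hVU a haV (-b) hbV
  simpa [sub_eq_add_neg] using this

private lemma precompactCover_inf [AddCommGroup G] {t₁ t₂ : TopologicalSpace G}
    (hg₁ : @IsTopologicalAddGroup G t₁ _) (hg₂ : @IsTopologicalAddGroup G t₂ _)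
    (h₁ : PrecompactCover t₁) (h₂ : PrecompactCover t₂) :
    PrecompactCover (t₁ ⊓ t₂) := by
  classical
  intro U hU
  rw [nhds_inf (t₁ := t₁) (t₂ := t₂), Filter.mem_inf_iff] at hU
  obtain ⟨U₁, hU₁, U₂, hU₂, rfl⟩ := hU
  obtain ⟨V₁, hV₁, hV₁U⟩ := exists_sub_nhds t₁ hg₁ hU₁
  obtain ⟨V₂, hV₂, hV₂U⟩ := exists_sub_nhds t₂ hg₂ hU₂
  obtain ⟨F₁, hF₁fin, hF₁⟩ := h₁ V₁ hV₁
  obtain ⟨F₂, hF₂fin, hF₂⟩ := h₂ V₂ hV₂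
  let pick : G → G → Set G := fun a b =>
    if h : ∃ g : G, g - a ∈ V₁ ∧ g - b ∈ V₂ then {h.choose} else ∅
  refine ⟨⋃ a ∈ F₁, ⋃ b ∈ F₂, pick a b, ?_, ?_⟩
  · refine hF₁fin.biUnion fun a _ => hF₂fin.biUnion fun b _ => ?_
    by_cases h : ∃ g : G, g - a ∈ V₁ ∧ g - b ∈ V₂ <;> simp [pick, h]
  · intro x
    obtain ⟨a, haF, hxa⟩ := hF₁ x
    obtain ⟨b, hbF, hxb⟩ := hF₂ x
    have hex : ∃ g : G, g - a ∈ V₁ ∧ g - b ∈ V₂ := ⟨x, hxa, hxb⟩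
    refine ⟨hex.choose, ?_, ?_, ?_⟩
    · refine Set.mem_biUnion haF (Set.mem_biUnion hbF ?_)
      simp only [pick, dif_pos hex, Set.mem_singleton_iff]
    · have h1 := hV₁U (x - a) hxa (hex.choose - a) hex.choose_spec.1
      simpa [sub_sub_sub_cancel_right] using h1
    · have h2 := hV₂U (x - b) hxb (hex.choose - b) hex.choose_spec.2
      simpa [sub_sub_sub_cancel_right] using h2

private lemma precompactCover_induced [AddCommGroup G] (χ : G →+ Torus) :
    PrecompactCover (TopologicalSpace.induced (⇑χ) inferInstance) := by
  classical
  intro U hU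
  rw [nhds_induced] at hU
  obtain ⟨W, hW, hWU⟩ := Filter.mem_comap.mp hU
  rw [map_zero] at hW
  obtain ⟨V, hV, hVW⟩ := exists_sub_nhds _ inferInstance hW
  obtain ⟨V₀, hV₀V, hV₀open, hV₀mem⟩ := mem_nhds_iff.mp hV
  set O : Torus → Set Torus := fun t => (fun s => s - t) ⁻¹' V₀ with hO
  have hOopen : ∀ t, IsOpen (O t) := fun t =>
    (continuous_id.sub continuous_const).isOpen_preimage _ hV₀open
  have hcov : (Set.univ : Set Torus) ⊆ ⋃ t : Torus, O t := by
    intro s _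
    exact Set.mem_iUnion.mpr ⟨s, by simp [O, hV₀mem]⟩
  obtain ⟨T, hT⟩ := isCompact_univ.elim_finite_subcover O hOopen hcov
  let pick : Torus → Set G := fun t =>
    if h : ∃ g : G, χ g ∈ O t then {h.choose} else ∅
  refine ⟨⋃ t ∈ (T : Set Torus), pick t, ?_, ?_⟩
  · refine T.finite_toSet.biUnion fun t _ => ?_
    by_cases h : ∃ g : G, χ g ∈ O t <;> simp [pick, h]
  · intro x
    obtain ⟨t, htT, hxt⟩ := Set.mem_iUnion₂.mp (hT (Set.mem_univ (χ x)))
    have hex : ∃ g : G, χ g ∈ O t := ⟨x, hxt⟩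
    refine ⟨hex.choose, Set.mem_biUnion htT ?_, ?_⟩
    · simp only [pick, dif_pos hex, Set.mem_singleton_iff]
    · apply hWU
      have h1 : χ x - t ∈ V₀ := hxt
      have h2 : χ hex.choose - t ∈ V₀ := hex.choose_spec
      have := hVW _ (hV₀V h1) _ (hV₀V h2)
      rw [sub_sub_sub_cancel_right] at this
      simpa [Set.mem_preimage, map_sub] using this

private lemma t2space_mono {X : Type*} {t t' : TopologicalSpace X} (h : t ≤ t')
    (ht' : @T2Space X t') : @T2Space X t := by
  letI := t
  constructor
  intro x y hxy
  obtain ⟨u, v, hu, hv, hxu, hyv, huv⟩ := @t2_separation X t' ht' x y hxy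
  exact ⟨u, v, hu.mono h, hv.mono h, hxu, hyv, huv⟩

private lemma contChar_of_tendsto [AddCommGroup G] {τ : TopologicalSpace G} {u : ℕ → G}
    (hτu : IsTauU u τ) (χ : G →+ Torus)
    (hχ : Filter.Tendsto (fun n => χ (u n)) Filter.atTop (𝓝 (0 : Torus))) :
    @Continuous G Torus τ _ (⇑χ) := by
  obtain ⟨⟨⟨hg, ht2⟩, hpc⟩, hconv, hmin⟩ := hτu
  set ti := TopologicalSpace.induced (⇑χ) (inferInstance : TopologicalSpace Torus) with hti
  have hgi : @IsTopologicalAddGroup G ti _ := topologicalAddGroup_induced χ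
  have hgt' : @IsTopologicalAddGroup G (τ ⊓ ti) _ := topologicalAddGroup_inf hg hgi
  have ht2' : @T2Space G (τ ⊓ ti) := t2space_mono inf_le_left ht2
  have hconv' : ConvergesToZero (τ ⊓ ti) u := by
    unfold ConvergesToZero
    rw [nhds_inf (t₁ := τ) (t₂ := ti)]
    refine Filter.tendsto_inf.mpr ⟨hconv, ?_⟩
    rw [hti, nhds_induced]
    refine tendsto_comap_iff.mpr ?_
    simpa [Function.comp_def, map_zero] using hχ
  have hpc' : IsPrecompactGroupTopology (τ ⊓ ti) :=
    ⟨⟨hgt', ht2'⟩, precompactCover_inf hg hgi hpc (precompactCover_induced χ)⟩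
  have hle := hmin _ hpc' hconv'
  exact continuous_iff_le_induced.mpr (le_trans hle inf_le_right)

private lemma countable_closure_of_countable {G : Type*} [AddCommGroup G] {s : Set G}
    (hs : s.Countable) : (AddSubgroup.closure s : Set G).Countable := by
  classical
  set t : Set G := s ∪ (fun x : G => -x) '' s with ht
  have htc : t.Countable := hs.union (hs.image _)
  haveI := htc.to_subtype
  have htneg : ∀ a : G, a ∈ t → -a ∈ t := by
    rintro a (ha | ⟨b, hb, rfl⟩)
    · exact Or.inr ⟨a, ha, rfl⟩
    · rw [neg_neg]; exact Or.inl hb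
  set f : List ↥t → G := fun l => (l.map (Subtype.val)).sum with hf
  have hsum_neg : ∀ m : List G, (m.map fun a => -a).sum = -m.sum := by
    intro m
    induction m with
    | nil => simp
    | cons a m ih => simp [ih, neg_add, add_comm]
  have hrange : (AddSubgroup.closure s : Set G) ⊆ Set.range f := by
    intro x hx
    refine AddSubgroup.closure_induction (p := fun g _ => g ∈ Set.range f) ?_ ?_ ?_ ?_ hx
    · intro y hy
      exact ⟨[⟨y, Or.inl hy⟩], by simp [f]⟩
    · exact ⟨[], by simp [f]⟩
    · rintro y z - - ⟨ly, rfl⟩ ⟨lz, rfl⟩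
      exact ⟨ly ++ lz, by simp [f]⟩
    · rintro y - ⟨l, rfl⟩
      refine ⟨l.map fun a => ⟨-a.1, htneg a.1 a.2⟩, ?_⟩
      simp only [f, List.map_map]
      rw [show (Subtype.val ∘ fun a : ↥t => (⟨-a.1, htneg a.1 a.2⟩ : ↥t)) = (fun b => -b) ∘ Subtype.val from rfl,
        ← List.map_map, hsum_neg]
  exact Set.Countable.mono hrange (Set.countable_range f)

private lemma torusSep {A : Type*} [AddCommGroup A] {a : A} (ha : a ≠ 0) :
    ∃ χ : A →+ Torus, χ a ≠ 0 := by
  obtain ⟨c, hc⟩ := CharacterModule.exists_character_apply_ne_zero_of_ne_zero ha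
  have hcomap : AddSubgroup.zmultiples (1 : ℚ) ≤
      AddSubgroup.comap (Rat.castHom ℝ).toAddMonoidHom (AddSubgroup.zmultiples (1 : ℝ)) := by
    intro q hq
    obtain ⟨k, hk⟩ := AddSubgroup.mem_zmultiples_iff.mp hq
    refine AddSubgroup.mem_comap.mpr (AddSubgroup.mem_zmultiples_iff.mpr ⟨k, ?_⟩)
    have : ((k • (1:ℚ) : ℚ) : ℝ) = (q : ℝ) := by exact_mod_cast congrArg (fun x : ℚ => (x : ℝ)) hk
    simpa using this
  set ι : AddCircle (1 : ℚ) →+ Torus :=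
    QuotientAddGroup.map (AddSubgroup.zmultiples (1:ℚ)) (AddSubgroup.zmultiples (1:ℝ))
      (Rat.castHom ℝ).toAddMonoidHom hcomap with hι
  have hιinj : ∀ x : AddCircle (1:ℚ), ι x = 0 → x = 0 := by
    intro x
    induction x using QuotientAddGroup.induction_on with
    | H q =>
      intro hq
      have : ((q : ℝ) : Torus) = 0 := by
        simpa [hι, QuotientAddGroup.map_mk] using hq
      have hmem : (q : ℝ) ∈ AddSubgroup.zmultiples (1 : ℝ) := (QuotientAddGroup.eq_zero_iff _).mp this
      obtain ⟨k, hk⟩ := AddSubgroup.mem_zmultiples_iff.mp hmem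
      have hq' : q = (k : ℚ) := by
        have h2 : ((k : ℚ) : ℝ) = (q : ℝ) := by rw [← hk, zsmul_eq_mul, mul_one]; push_cast; ring
        exact_mod_cast h2.symm
      refine (QuotientAddGroup.eq_zero_iff _).mpr (AddSubgroup.mem_zmultiples_iff.mpr ⟨k, ?_⟩)
      simp [hq']
  refine ⟨ι.comp (c : A →+ AddCircle (1:ℚ)), fun h => hc ?_⟩
  exact hιinj _ h

private lemma bohr_char_continuous {X : Type*} [AddCommGroup X] (χ : X →+ Torus) :
    @Continuous X Torus (bohrDiscrete X) _ ⇑χ :=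
  continuous_iff_le_induced.mpr (iInf_le (fun χ : X →+ Torus => TopologicalSpace.induced (⇑χ) inferInstance) χ)

private lemma bohr_t2 {X : Type*} [AddCommGroup X] : @T2Space X (bohrDiscrete X) := by
  letI := bohrDiscrete X
  constructor
  intro x y hxy
  obtain ⟨χ, hχ⟩ := torusSep (sub_ne_zero.mpr hxy)
  have hne : χ x ≠ χ y := fun h => hχ (by rw [map_sub, h, sub_self])
  obtain ⟨u, v, hu, hv, hxu, hyv, huv⟩ := t2_separation hne
  exact ⟨⇑χ ⁻¹' u, ⇑χ ⁻¹' v, (bohr_char_continuous χ).isOpen_preimage u hu,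
    (bohr_char_continuous χ).isOpen_preimage v hv, hxu, hyv, huv.preimage _⟩

private lemma bohr_subgroup_closed {X : Type*} [AddCommGroup X] (Y : AddSubgroup X) :
    @IsClosed X (bohrDiscrete X) (Y : Set X) := by
  letI := bohrDiscrete X
  have hset : (Y : Set X) = ⋂ ψ : (X ⧸ Y) →+ Torus, (fun x : X => ψ (QuotientAddGroup.mk x)) ⁻¹' {0} := by
    ext x
    simp only [Set.mem_iInter, Set.mem_preimage, Set.mem_singleton_iff, SetLike.mem_coe]
    constructor
    · intro hx ψ
      rw [(QuotientAddGroup.eq_zero_iff x).mpr hx, map_zero]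
    · intro h
      by_contra hx
      have hne : (QuotientAddGroup.mk x : X ⧸ Y) ≠ 0 := fun hh => hx ((QuotientAddGroup.eq_zero_iff x).mp hh)
      obtain ⟨ψ, hψ⟩ := torusSep hne
      exact hψ (h ψ)
  rw [hset]
  exact isClosed_iInter fun ψ =>
    IsClosed.preimage (bohr_char_continuous (ψ.comp (QuotientAddGroup.mk' Y))) isClosed_singleton

private lemma bohr_compact_finite {X : Type*} [AddCommGroup X] {C : Set X}
    (hC : @IsCompact X (bohrDiscrete X) C) : C.Finite := by
  classical
  letI tX : TopologicalSpace X := bohrDiscrete X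
  haveI : T2Space X := bohr_t2
  by_contra hinf
  have hinf' : C.Infinite := hinf
  set x : ℕ ↪ ↥C := hinf'.natEmbedding with hxdef
  set Y : AddSubgroup X := AddSubgroup.closure (Set.range fun n => (x n : X)) with hY
  have hYcnt : (Y : Set X).Countable := countable_closure_of_countable (Set.countable_range _)
  haveI : Countable ↥(Y : Set X) := hYcnt.to_subtype
  have hYc : IsClosed (Y : Set X) := bohr_subgroup_closed Y
  have hC' : IsCompact (C ∩ (Y : Set X)) := hC.inter_right hYc
  haveI : CompactSpace ↥(C ∩ (Y:Set X)) := isCompact_iff_compactSpace.mp hC'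
  -- separating characters indexed by pairs from Y
  set I := ↥(Y : Set X) × ↥(Y : Set X) with hI
  set csep : I → (X →+ Torus) := fun p =>
    if h : (p.1 : X) = (p.2 : X) then 0 else (torusSep (sub_ne_zero.mpr h)).choose with hcsepdef
  have hcsep : ∀ p : I, (p.1 : X) ≠ (p.2 : X) → csep p (p.1 : X) ≠ csep p (p.2 : X) := by
    intro p hne heq
    have hspec := (torusSep (sub_ne_zero.mpr hne)).choose_spec
    rw [hcsepdef] at heq
    simp only [dif_neg hne] at heq
    exact hspec (by rw [map_sub, heq, sub_self])
  set Ψ : ↥(C ∩ (Y:Set X)) → (I → Torus) := fun k p => csep p (k : X) with hΨdef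
  have hΨc : Continuous Ψ :=
    continuous_pi fun p => (bohr_char_continuous (csep p)).comp continuous_subtype_val
  have hΨi : Function.Injective Ψ := by
    intro k k' hkk
    by_contra hne
    have hxne : (k : X) ≠ (k' : X) := fun h => hne (Subtype.ext h)
    have := hcsep (⟨(k : X), k.2.2⟩, ⟨(k' : X), k'.2.2⟩) hxne
    exact this (congrFun hkk (⟨(k : X), k.2.2⟩, ⟨(k' : X), k'.2.2⟩))
  have hemb := (hΨc.isClosedEmbedding hΨi).isEmbedding
  set ξ : ℕ → ↥(C ∩ (Y:Set X)) := fun n =>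
    ⟨(x n : X), (x n).2, AddSubgroup.subset_closure ⟨n, rfl⟩⟩ with hξ
  have himg : IsCompact (Set.range Ψ) := isCompact_range hΨc
  obtain ⟨b, hbmem, φ, hφ, hφt⟩ := himg.isSeqCompact
    (x := fun n => Ψ (ξ n)) (fun n => Set.mem_range_self _)
  obtain ⟨z'', hz''⟩ := hbmem
  have hξt : Tendsto (ξ ∘ φ) atTop (𝓝 z'') := by
    refine hemb.tendsto_nhds_iff.mpr ?_
    rw [hz'']
    exact hφt
  have hz't : Tendsto (fun k => ((ξ (φ k)) : X)) atTop (𝓝 ((z'' : X))) :=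
    ((continuous_subtype_val.tendsto z'').comp hξt)
  have hchar : ∀ χ : X →+ Torus,
      Tendsto (fun k => χ ((x (φ k) : X))) atTop (𝓝 (χ (z'' : X))) := by
    intro χ
    exact ((bohr_char_continuous χ).tendsto _).comp hz't
  -- the compact group of "partial characters"
  set Γ : AddSubgroup (X → Torus) :=
    { carrier := {g | ∀ a b : X, g (a + b) = g a + g b}
      add_mem' := by
        intro f g hf hg a b
        simp only [Pi.add_apply, hf a b, hg a b]
        abel
      zero_mem' := by intro a b; simp
      neg_mem' := by
        intro f hf a b
        simp only [Pi.neg_apply, hf a b, neg_add] } with hΓ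
  letI : MeasurableSpace ↥Γ := borel _
  haveI : BorelSpace ↥Γ := ⟨rfl⟩
  have hΓclosed : IsClosed (Γ : Set (X → Torus)) := by
    have hh : (Γ : Set (X → Torus)) = ⋂ (a : X), ⋂ (b : X), {g : X → Torus | g (a+b) = g a + g b} := by
      ext g
      simp only [Set.mem_iInter, Set.mem_setOf_eq, SetLike.mem_coe]
      rfl
    rw [hh]
    exact isClosed_iInter fun a => isClosed_iInter fun b =>
      isClosed_eq (continuous_apply (a+b)) (((continuous_apply a).add (continuous_apply b)))
  haveI : CompactSpace ↥Γ := isCompact_iff_compactSpace.mp hΓclosed.isCompact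
  set K₀ : TopologicalSpace.PositiveCompacts ↥Γ :=
    ⟨⟨Set.univ, isCompact_univ⟩, by
      simp only [TopologicalSpace.Compacts.coe_mk, interior_univ]
      exact ⟨0, trivial⟩⟩ with hK₀
  set μ := MeasureTheory.Measure.addHaarMeasure K₀ with hμ
  haveI : μ.IsAddLeftInvariant := Measure.isAddLeftInvariant_addHaarMeasure K₀
  haveI : IsFiniteMeasure μ := by
    constructor
    rw [show (Set.univ : Set ↥Γ) = (K₀ : Set ↥Γ) from rfl, hμ, Measure.addHaarMeasure_self]
    exact ENNReal.one_lt_top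
  set e : Torus → ℂ := fun t => ((AddCircle.toCircle t : Circle) : ℂ) with he
  have he_cont : Continuous e := continuous_subtype_val.comp AddCircle.continuous_toCircle
  have he_norm : ∀ t, ‖e t‖ = 1 := fun t => by
    show ‖((AddCircle.toCircle t : Circle) : ℂ)‖ = 1
    exact Circle.norm_coe _
  have he_zero : e 0 = 1 := by
    show ((AddCircle.toCircle (0 : Torus) : Circle) : ℂ) = 1
    rw [AddCircle.toCircle_zero, Circle.coe_one]
  have he_add : ∀ s t : Torus, e (s + t) = e s * e t := fun s t => by
    show ((AddCircle.toCircle (s + t) : Circle) : ℂ)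
        = ((AddCircle.toCircle s : Circle) : ℂ) * ((AddCircle.toCircle t : Circle) : ℂ)
    rw [AddCircle.toCircle_add, Circle.coe_mul]
  have he_one : ∀ t : Torus, e t = 1 → t = 0 := by
    intro t h
    refine AddCircle.injective_toCircle one_ne_zero ?_
    rw [AddCircle.toCircle_zero]
    have h' : ((AddCircle.toCircle t : Circle) : ℂ) = 1 := h
    exact Subtype.ext (by rw [h']; exact Circle.coe_one.symm)
  have heval : ∀ w : X, Continuous fun γ : ↥Γ => e ((γ : X → Torus) w) :=
    fun w => he_cont.comp ((continuous_apply w).comp continuous_subtype_val)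
  have hmeas : ∀ w : X, AEStronglyMeasurable (fun γ : ↥Γ => e ((γ : X → Torus) w)) μ :=
    fun w => (heval w).aestronglyMeasurable
  -- orthogonality
  have hortho : ∀ w : X, w ≠ 0 → ∫ γ : ↥Γ, e ((γ : X → Torus) w) ∂μ = 0 := by
    intro w hw
    obtain ⟨χ₀, hχ₀⟩ := torusSep hw
    have hγ₀mem : ⇑χ₀ ∈ Γ := fun a b => map_add χ₀ a b
    set γ₀ : ↥Γ := ⟨⇑χ₀, hγ₀mem⟩ with hγ₀
    set c := ∫ γ : ↥Γ, e ((γ : X → Torus) w) ∂μ with hc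
    have hmap : Measure.map (fun γ : ↥Γ => γ₀ + γ) μ = μ := map_add_left_eq_self μ γ₀
    have h1 : c = ∫ γ : ↥Γ, e ((((γ₀ + γ) : ↥Γ) : X → Torus) w) ∂μ := by
      conv_lhs => rw [hc, ← hmap]
      rw [integral_map]
      · exact (continuous_const.add continuous_id).measurable.aemeasurable
      · rw [hmap]; exact hmeas w
    have h2 : ∀ γ : ↥Γ, e ((((γ₀ + γ) : ↥Γ) : X → Torus) w) = e (χ₀ w) * e ((γ : X → Torus) w) := by
      intro γ
      have hcoe : (((γ₀ + γ) : ↥Γ) : X → Torus) w = χ₀ w + (γ : X → Torus) w := rfl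
      rw [hcoe, he_add]
    have h3 : c = e (χ₀ w) * c := by
      calc c = ∫ γ : ↥Γ, e ((((γ₀ + γ) : ↥Γ) : X → Torus) w) ∂μ := h1
        _ = ∫ γ : ↥Γ, e (χ₀ w) * e ((γ : X → Torus) w) ∂μ := by simp only [h2]
        _ = e (χ₀ w) * ∫ γ : ↥Γ, e ((γ : X → Torus) w) ∂μ := integral_const_mul _ _
        _ = e (χ₀ w) * c := rfl
    have h4 : e (χ₀ w) ≠ 1 := fun h => hχ₀ (he_one _ h)
    have h5 : (1 - e (χ₀ w)) * c = 0 := by linear_combination h3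
    rcases mul_eq_zero.mp h5 with h | h
    · exact absurd (by linear_combination -h : e (χ₀ w) = 1) h4
    · exact h
  -- dominated convergence
  set w : ℕ → X := fun k => (x (φ k) : X) - (z'' : X) with hwdef
  have hwt : ∀ γ : ↥Γ, Tendsto (fun k => e ((γ : X → Torus) (w k))) atTop (𝓝 1) := by
    intro γ
    set χγ : X →+ Torus := AddMonoidHom.mk' (γ : X → Torus) γ.2 with hχγ
    have hγw : ∀ k, (γ : X → Torus) (w k) = χγ ((x (φ k) : X)) - χγ (z'' : X) := fun k => by
      rw [hwdef]; exact map_sub χγ _ _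
    have ht0 : Tendsto (fun k => (γ : X → Torus) (w k)) atTop (𝓝 0) := by
      simp only [hγw]
      simpa using (hchar χγ).sub (tendsto_const_nhds (x := χγ (z'' : X)))
    have := (he_cont.tendsto 0).comp ht0
    rwa [he_zero] at this
  have hDCT := MeasureTheory.tendsto_integral_of_dominated_convergence (μ := μ)
      (F := fun k (γ : ↥Γ) => e ((γ : X → Torus) (w k))) (f := fun _ => (1:ℂ)) (bound := fun _ => 1)
      (fun k => hmeas (w k)) (integrable_const 1)
      (fun k => Filter.Eventually.of_forall fun γ => by rw [he_norm])
      (Filter.Eventually.of_forall hwt)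
  have hμuniv : μ Set.univ = 1 := by
    rw [show (Set.univ : Set ↥Γ) = (K₀ : Set ↥Γ) from rfl, hμ, Measure.addHaarMeasure_self]
  have hlim1 : Tendsto (fun k => ∫ γ : ↥Γ, e ((γ : X → Torus) (w k)) ∂μ) atTop (𝓝 1) := by
    have : ∫ (_ : ↥Γ), (1:ℂ) ∂μ = 1 := by
      rw [integral_const, measureReal_def, hμuniv, ENNReal.toReal_one, one_smul]
    rwa [this] at hDCT
  have hev : ∀ᶠ k in atTop, (∫ γ : ↥Γ, e ((γ : X → Torus) (w k)) ∂μ) = 0 := by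
    have hxinj : Function.Injective fun n => (x n : X) :=
      fun a b h => x.injective (Subtype.ext h)
    by_cases hcase : ∃ k₀, (x (φ k₀) : X) = (z'' : X)
    · obtain ⟨k₀, hk₀⟩ := hcase
      rw [eventually_atTop]
      refine ⟨k₀ + 1, fun k hk => hortho _ ?_⟩
      rw [hwdef, sub_ne_zero]
      intro hcontra
      have : φ k = φ k₀ := hxinj (hcontra.trans hk₀.symm)
      have : k = k₀ := hφ.injective this
      omega
    · refine Filter.Eventually.of_forall fun k => hortho _ ?_
      rw [hwdef, sub_ne_zero]
      exact fun h => hcase ⟨k, h⟩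
  have hlim0 : Tendsto (fun k => ∫ γ : ↥Γ, e ((γ : X → Torus) (w k)) ∂μ) atTop (𝓝 (0:ℂ)) :=
    Tendsto.congr' (by filter_upwards [hev] with k hk using hk.symm) tendsto_const_nhds
  exact one_ne_zero (tendsto_nhds_unique hlim1 hlim0)

private lemma firstCountable_of_countable_compact_t2 {K : Type*} [TopologicalSpace K]
    [Countable K] [CompactSpace K] [T2Space K] : FirstCountableTopology K := by
  classical
  constructor
  intro a
  have sep : ∀ i : {y : K // y ≠ a}, ∃ uv : Set K × Set K,
      IsOpen uv.1 ∧ IsOpen uv.2 ∧ (i : K) ∈ uv.1 ∧ a ∈ uv.2 ∧ Disjoint uv.1 uv.2 := by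
    intro i
    obtain ⟨u, v, hu, hv, hiu, hav, huv⟩ := t2_separation i.2
    exact ⟨⟨u, v⟩, hu, hv, hiu, hav, huv⟩
  choose uv hu hv hiu hav hdisj using sep
  have hb : (𝓝 a).HasBasis (fun _ : Finset {y : K // y ≠ a} => True)
      (fun s => ⋂ i ∈ s, (uv i).2) := by
    rw [Filter.hasBasis_iff]
    intro t
    constructor
    · intro ht
      obtain ⟨O, hOt, hOopen, haO⟩ := mem_nhds_iff.mp ht
      have hcov : Oᶜ ⊆ ⋃ i : {y : K // y ≠ a}, (uv i).1 := by
        intro z hz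
        exact Set.mem_iUnion.mpr ⟨⟨z, fun h => hz (h ▸ haO)⟩, hiu _⟩
      obtain ⟨s, hs⟩ := (hOopen.isClosed_compl.isCompact).elim_finite_subcover _ (fun i => hu i) hcov
      refine ⟨s, trivial, fun z hz => hOt ?_⟩
      by_contra hzO
      obtain ⟨i, his, hzi⟩ := Set.mem_iUnion₂.mp (hs hzO)
      have hz2 : z ∈ (uv i).2 := Set.mem_iInter₂.mp hz i his
      exact Set.disjoint_left.mp (hdisj i) hzi hz2
    · rintro ⟨s, -, hsub⟩
      refine Filter.mem_of_superset ?_ hsub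
      exact (Filter.biInter_finset_mem s).mpr fun i _ => (hv i).mem_nhds (hav i)
  exact hb.isCountablyGenerated

end AuxProofs

/-- An ss-characterized precompact Hausdorff abelian group which is a
k-space is countable and sequential. -/
theorem stmt10 {G : Type*} [AddCommGroup G] (τ : TopologicalSpace G)
    (hss : SSCharacterized τ) (hk : IsKSpace τ) :
    Countable G ∧ @SequentialSpace G τ := by
  classical
  obtain ⟨u, hτu⟩ := hss
  obtain ⟨⟨hg, ht2⟩, hpc⟩ := hτu.1
  letI := τ
  haveI := hg
  haveI := ht2
  set H : AddSubgroup G := AddSubgroup.closure (Set.range u) with hH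
  have hmemH : ∀ n, u n ∈ H := fun n => AddSubgroup.subset_closure (Set.mem_range_self n)
  have hqcont : ∀ ψ : (G ⧸ H) →+ Torus,
      Continuous fun g : G => ψ (QuotientAddGroup.mk g) := by
    intro ψ
    have hzero : ∀ n, (ψ.comp (QuotientAddGroup.mk' H)) (u n) = 0 := fun n => by
      have : ((u n : G) : G ⧸ H) = 0 := (QuotientAddGroup.eq_zero_iff (u n)).mpr (hmemH n)
      simp [AddMonoidHom.comp_apply, QuotientAddGroup.mk'_apply, this]
    have htend : Filter.Tendsto (fun n => (ψ.comp (QuotientAddGroup.mk' H)) (u n))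
        Filter.atTop (𝓝 (0 : Torus)) := by
      simp only [hzero]
      exact tendsto_const_nhds
    exact contChar_of_tendsto hτu (ψ.comp (QuotientAddGroup.mk' H)) htend
  have hmkcont : @Continuous G (G ⧸ H) τ (bohrDiscrete (G ⧸ H)) (QuotientAddGroup.mk) := by
    refine continuous_iInf_rng.mpr fun ψ => continuous_induced_rng.mpr ?_
    exact hqcont ψ
  have hsing : ∀ c : G ⧸ H, @IsClosed (G ⧸ H) (bohrDiscrete (G ⧸ H)) {c} := by
    intro c
    letI := bohrDiscrete (G ⧸ H)
    haveI : T2Space (G ⧸ H) := bohr_t2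
    exact isClosed_singleton
  have hcoset : ∀ c : G ⧸ H, IsClosed (QuotientAddGroup.mk ⁻¹' {c} : Set G) :=
    fun c => @IsClosed.preimage G (G ⧸ H) τ (bohrDiscrete (G ⧸ H)) _ hmkcont _ (hsing c)
  have himgfin : ∀ K : Set G, IsCompact K →
      ((QuotientAddGroup.mk '' K : Set (G ⧸ H))).Finite := by
    intro K hK
    exact bohr_compact_finite (@IsCompact.image G (G ⧸ H) τ (bohrDiscrete (G ⧸ H)) _ _ hK hmkcont)
  have hpreclosed : ∀ B : Set (G ⧸ H), IsClosed (QuotientAddGroup.mk ⁻¹' B : Set G) := by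
    intro B
    apply hk
    intro K hK
    have hfin : ((QuotientAddGroup.mk '' K) ∩ B).Finite := (himgfin K hK).inter_of_left B
    have hkey : {x : ↥K | (x : G) ∈ QuotientAddGroup.mk ⁻¹' B}
        = (Subtype.val : ↥K → G) ⁻¹'
          (⋃ c ∈ (QuotientAddGroup.mk '' K) ∩ B, QuotientAddGroup.mk ⁻¹' {c}) := by
      ext x
      simp only [Set.mem_setOf_eq, Set.mem_preimage, Set.mem_iUnion, Set.mem_singleton_iff,
        Set.mem_inter_iff, Set.mem_image, exists_prop]
      constructor
      · intro hxB
        exact ⟨QuotientAddGroup.mk (x : G), ⟨⟨(x : G), x.2, rfl⟩, hxB⟩, rfl⟩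
      · rintro ⟨c, ⟨-, hcB⟩, hxc⟩
        exact hxc ▸ hcB
    rw [hkey]
    exact (hfin.isClosed_biUnion fun c _ => hcoset c).preimage continuous_subtype_val
  have hHopen : IsOpen (H : Set G) := by
    have h1 := hpreclosed (({(0 : G ⧸ H)} : Set (G ⧸ H))ᶜ)
    have h2 : ((QuotientAddGroup.mk : G → G ⧸ H) ⁻¹' (({(0 : G ⧸ H)} : Set (G ⧸ H))ᶜ) : Set G) = (H : Set G)ᶜ := by
      ext g
      simp [QuotientAddGroup.eq_zero_iff]
    rw [h2] at h1
    exact isClosed_compl_iff.mp h1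
  obtain ⟨F, hFfin, hFcov⟩ := hpc (H : Set G) (hHopen.mem_nhds H.zero_mem)
  have hHcnt : (H : Set G).Countable := countable_closure_of_countable (Set.countable_range u)
  have hGcnt : Countable G := by
    rw [← Set.countable_univ_iff]
    have hsub : (Set.univ : Set G) ⊆ ⋃ f ∈ F, (fun h : G => f + h) '' (H : Set G) := by
      intro g _
      obtain ⟨f, hfF, hfH⟩ := hFcov g
      exact Set.mem_biUnion hfF ⟨g - f, hfH, by simp⟩
    exact Set.Countable.mono hsub (hFfin.countable.biUnion fun f _ => hHcnt.image _)
  refine ⟨hGcnt, ?_⟩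
  constructor
  intro A hA
  apply hk
  intro K hK
  haveI : CompactSpace ↥K := isCompact_iff_compactSpace.mp hK
  haveI : Countable ↥K := Subtype.countable
  haveI : FirstCountableTopology ↥K := firstCountable_of_countable_compact_t2
  have hseq : IsSeqClosed {x : ↥K | (x : G) ∈ A} := by
    intro y p hy hyt
    exact hA hy ((continuous_subtype_val.tendsto p).comp hyt)
  exact hseq.isClosed

end SSChar
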